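/- Let H ∈ ℂ^{n×n} be Hermitian, let P_* ∈ ℂ^{n×k} have orthonormal columns spanning an invariant subspace of H, and let P ∈ ℂ^{n×k} have orthonormal columns. Then ‖HP − P(Pᴴ H P)‖_F ≤ (λ_1(H) − λ_n(H)) · ‖sin Θ(R(P), R(P_*))‖_F, where λ_1(H) and λ_n(H) are the largest and smallest eigenvalues of H and Θ(R(P), R(P_*)) is the diagonal matrix of canonical angles between the column spaces of P and P_*. -/

import Mathlib

open scoped ComplexOrder
open Matrix

/-- The tuple `f` rearranged into decreasing order; `sortedDesc f 0` is the largest entry. -/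
noncomputable def sortedDesc {m : ℕ} (f : Fin m → ℝ) : Fin m → ℝ :=
  fun i => (f ∘ Tuple.sort f) i.rev

/-- The singular values of a complex matrix, in decreasing order. -/
noncomputable def sv {n k : ℕ} (B : Matrix (Fin n) (Fin k) ℂ) : Fin k → ℝ :=
  sortedDesc fun i =>
    Real.sqrt ((Matrix.posSemidef_conjTranspose_mul_self B).isHermitian.eigenvalues i)

/-- The trace (nuclear) norm: the sum of the singular values. -/
noncomputable def trNorm {n k : ℕ} (B : Matrix (Fin n) (Fin k) ℂ) : ℝ := ∑ i, sv B i

/-- The Frobenius norm. -/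
noncomputable def frobNorm {n k : ℕ} (A : Matrix (Fin n) (Fin k) ℂ) : ℝ :=
  Real.sqrt (∑ i, ∑ j, ‖A i j‖ ^ 2)

/-- `‖sin Θ(R(X), R(Y))‖_F` where `Θ` is the diagonal matrix of canonical angles
`θ_i = arccos σ_i(Xᴴ Y)` between the column spaces of `X` and `Y`. -/
noncomputable def sinThetaF {n k : ℕ} (X Y : Matrix (Fin n) (Fin k) ℂ) : ℝ :=
  Real.sqrt (∑ i, Real.sin (Real.arccos (sv (Xᴴ * Y) i)) ^ 2)

/-- The smallest singular value. -/
noncomputable def smin {n k : ℕ} (B : Matrix (Fin n) (Fin k) ℂ) : ℝ := ⨅ i, sv B i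

/-- The spectral norm (largest singular value). -/
noncomputable def s2norm {n k : ℕ} (B : Matrix (Fin n) (Fin k) ℂ) : ℝ := ⨆ i, sv B i

/-- The old `Matrix.PosSemidef.sqrt` (removed from Mathlib), with its old definition. -/
noncomputable def psdSqrt {k : ℕ} {A : Matrix (Fin k) (Fin k) ℂ} (hA : A.PosSemidef) :
    Matrix (Fin k) (Fin k) ℂ :=
  hA.1.eigenvectorUnitary.1 * diagonal ((↑) ∘ Real.sqrt ∘ hA.1.eigenvalues) *
    (star hA.1.eigenvectorUnitary : Matrix (Fin k) (Fin k) ℂ)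

/-- The orthonormal polar factor `B (Bᴴ B)^{-1/2}` (for `B` of full column rank). -/
noncomputable def polarFactor {n k : ℕ} (B : Matrix (Fin n) (Fin k) ℂ) :
    Matrix (Fin n) (Fin k) ℂ :=
  B * (psdSqrt (Matrix.posSemidef_conjTranspose_mul_self B))⁻¹

/-- Eigenvalues of a Hermitian matrix, in decreasing order. -/
noncomputable def eigsDesc {n : ℕ} {H : Matrix (Fin n) (Fin n) ℂ} (hH : H.IsHermitian) :
    Fin n → ℝ :=
  sortedDesc hH.eigenvalues




/-- Frobenius quantity as a trace. -/
lemma sumSq_eq_trace {n k : ℕ} (A : Matrix (Fin n) (Fin k) ℂ) :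
    ∑ i, ∑ j, ‖A i j‖ ^ 2 = Complex.re ((Aᴴ * A).trace) := by
  rw [Matrix.trace, Complex.re_sum]
  rw [Finset.sum_comm]
  refine Finset.sum_congr rfl fun i _ => ?_
  simp only [Matrix.diag, Matrix.mul_apply, Matrix.conjTranspose_apply, Complex.re_sum]
  refine Finset.sum_congr rfl fun j _ => ?_
  rw [Complex.sq_norm]
  simp [Complex.normSq_eq_conj_mul_self, Complex.normSq_apply]

lemma frobNorm_eq_trace {n k : ℕ} (A : Matrix (Fin n) (Fin k) ℂ) :
    frobNorm A = Real.sqrt (Complex.re ((Aᴴ * A).trace)) := by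
  rw [frobNorm, sumSq_eq_trace]

lemma trace_re_nonneg {k : ℕ} {X : Matrix (Fin k) (Fin k) ℂ} (hX : X.PosSemidef) :
    0 ≤ Complex.re X.trace := by
  rw [Matrix.trace, Complex.re_sum]
  refine Finset.sum_nonneg fun i _ => ?_
  have := hX.re_dotProduct_nonneg (Pi.single i 1)
  simpa [dotProduct, Matrix.mulVec, Pi.single_apply, Finset.sum_ite_eq,
    dotProduct_single, RCLike.re] using this

lemma frobNorm_nonneg {n k : ℕ} (A : Matrix (Fin n) (Fin k) ℂ) : 0 ≤ frobNorm A :=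
  Real.sqrt_nonneg _

attribute [local instance] Matrix.frobeniusSeminormedAddCommGroup

lemma frobNorm_eq_norm {n k : ℕ} (A : Matrix (Fin n) (Fin k) ℂ) : frobNorm A = ‖A‖ := by
  rw [frobNorm, Matrix.frobenius_norm_def, ← Real.sqrt_eq_rpow]
  congr 1
  refine Finset.sum_congr rfl fun i _ => Finset.sum_congr rfl fun j _ => ?_
  norm_cast

lemma frobNorm_add_le {n k : ℕ} (A B : Matrix (Fin n) (Fin k) ℂ) :
    frobNorm (A + B) ≤ frobNorm A + frobNorm B := by
  simp only [frobNorm_eq_norm]; exact norm_add_le _ _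

lemma re_trace_mono {k n : ℕ} {c : ℝ} {N : Matrix (Fin n) (Fin n) ℂ}
    (h : (((c : ℂ)^2) • 1 - N).PosSemidef) (B : Matrix (Fin n) (Fin k) ℂ) :
    Complex.re ((Bᴴ * N * B).trace) ≤ c^2 * Complex.re ((Bᴴ * B).trace) := by
  have h2 := trace_re_nonneg (h.conjTranspose_mul_mul_same B)
  have e : Bᴴ * (((c : ℂ)^2) • 1 - N) * B
      = ((c : ℂ)^2) • (Bᴴ * B) - Bᴴ * N * B := by
    rw [Matrix.mul_sub, Matrix.sub_mul]
    rw [Matrix.mul_smul, Matrix.mul_one, Matrix.smul_mul]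
  rw [e, Matrix.trace_sub, Matrix.trace_smul] at h2
  have : Complex.re (((c:ℂ)^2) • (Bᴴ * B).trace) = c^2 * Complex.re ((Bᴴ * B).trace) := by
    push_cast
    simp [Complex.re_ofReal_mul, smul_eq_mul, ← Complex.ofReal_pow]
  simp only [Complex.sub_re, this] at h2
  linarith

/-- `‖A * B‖_F ≤ c * ‖B‖_F` when `AᴴA ≤ c² I`. -/
lemma frobNorm_mul_le_left {n m k : ℕ} {c : ℝ} (hc : 0 ≤ c)
    {A : Matrix (Fin n) (Fin m) ℂ} (h : (((c : ℂ)^2) • 1 - Aᴴ * A).PosSemidef)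
    (B : Matrix (Fin m) (Fin k) ℂ) :
    frobNorm (A * B) ≤ c * frobNorm B := by
  rw [frobNorm_eq_trace, frobNorm_eq_trace]
  have e : (A * B)ᴴ * (A * B) = Bᴴ * (Aᴴ * A) * B := by
    rw [Matrix.conjTranspose_mul]; simp only [Matrix.mul_assoc]
  rw [e]
  calc Real.sqrt (Complex.re ((Bᴴ * (Aᴴ * A) * B).trace))
      ≤ Real.sqrt (c^2 * Complex.re ((Bᴴ * B).trace)) :=
        Real.sqrt_le_sqrt (re_trace_mono h B)
    _ = c * Real.sqrt (Complex.re ((Bᴴ * B).trace)) := by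
        rw [Real.sqrt_mul (sq_nonneg c), Real.sqrt_sq hc]

/-- `‖A * B‖_F ≤ ‖A‖_F * c` when `BBᴴ ≤ c² I`. -/
lemma frobNorm_mul_le_right {n m k : ℕ} {c : ℝ} (hc : 0 ≤ c)
    (A : Matrix (Fin n) (Fin m) ℂ) {B : Matrix (Fin m) (Fin k) ℂ}
    (h : (((c : ℂ)^2) • 1 - B * Bᴴ).PosSemidef) :
    frobNorm (A * B) ≤ frobNorm A * c := by
  rw [frobNorm_eq_trace, frobNorm_eq_trace]
  rw [Matrix.trace_mul_comm, Matrix.trace_mul_comm Aᴴ A]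
  have e : (A * B) * (A * B)ᴴ = Aᴴᴴ * (B * Bᴴ) * Aᴴ := by
    rw [Matrix.conjTranspose_mul]; simp only [Matrix.conjTranspose_conjTranspose, Matrix.mul_assoc]
  rw [e]
  calc Real.sqrt (Complex.re ((Aᴴᴴ * (B * Bᴴ) * Aᴴ).trace))
      ≤ Real.sqrt (c^2 * Complex.re ((Aᴴᴴ * Aᴴ).trace)) :=
        Real.sqrt_le_sqrt (re_trace_mono h Aᴴ)
    _ = Real.sqrt (Complex.re ((A * Aᴴ).trace)) * c := by
        rw [Real.sqrt_mul (sq_nonneg c), Real.sqrt_sq hc, Matrix.conjTranspose_conjTranspose,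
          mul_comm]

lemma psd_core {n : ℕ} {H : Matrix (Fin n) (Fin n) ℂ} (hH : H.IsHermitian) {lo hi : ℝ}
    (hlo : ∀ i, lo ≤ hH.eigenvalues i) (hhi : ∀ i, hH.eigenvalues i ≤ hi) :
    ((((hi - lo)/2 : ℝ) : ℂ)^2 • 1 -
      (H - (((hi + lo)/2 : ℝ) : ℂ) • 1) * (H - (((hi + lo)/2 : ℝ) : ℂ) • 1)).PosSemidef := by
  set μ : ℝ := (hi + lo)/2 with hμ
  set d : ℝ := (hi - lo)/2 with hd
  set U : Matrix (Fin n) (Fin n) ℂ := (hH.eigenvectorUnitary : Matrix (Fin n) (Fin n) ℂ) with hU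
  have hU1 : Uᴴ * U = 1 := by
    rw [← Matrix.star_eq_conjTranspose]
    exact Matrix.mem_unitaryGroup_iff'.mp hH.eigenvectorUnitary.2
  have hU2 : U * Uᴴ = 1 := by
    rw [← Matrix.star_eq_conjTranspose]
    exact Matrix.mem_unitaryGroup_iff.mp hH.eigenvectorUnitary.2
  have hsm : ∀ (z : ℂ), z • (1 : Matrix (Fin n) (Fin n) ℂ) = U * (z • 1) * Uᴴ := fun z => by
    rw [Matrix.mul_smul, Matrix.mul_one, Matrix.smul_mul, hU2]
  set E : Matrix (Fin n) (Fin n) ℂ :=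
    Matrix.diagonal (fun i => ((hH.eigenvalues i : ℂ) - (μ : ℂ))) with hE
  have hspec := hH.spectral_theorem
  rw [Unitary.conjStarAlgAut_apply, Matrix.star_eq_conjTranspose] at hspec
  have hG : H - (μ : ℂ) • 1 = U * E * Uᴴ := by
    have hE' : E = Matrix.diagonal (RCLike.ofReal ∘ hH.eigenvalues) - (μ : ℂ) • 1 := by
      ext i j
      by_cases hij : i = j <;>
        simp [hE, Matrix.diagonal_apply, Matrix.one_apply, hij]
    rw [hE', Matrix.mul_sub, Matrix.sub_mul, ← hspec, ← hsm]
  have hEE : E * E = Matrix.diagonal (fun i => ((hH.eigenvalues i : ℂ) - μ)^2) := by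
    rw [hE, Matrix.diagonal_mul_diagonal]
    exact congrArg Matrix.diagonal (funext fun i => by ring)
  have key : ((d : ℂ)^2 • 1 - (H - (μ:ℂ) • 1) * (H - (μ:ℂ) • 1))
      = U * Matrix.diagonal (fun i => (((d^2 - (hH.eigenvalues i - μ)^2 : ℝ)) : ℂ)) * Uᴴ := by
    rw [hG]
    have h1 : (U * E * Uᴴ) * (U * E * Uᴴ) = U * (E * E) * Uᴴ := by
      calc (U * E * Uᴴ) * (U * E * Uᴴ) = U * E * (Uᴴ * U) * E * Uᴴ := by
            simp only [Matrix.mul_assoc]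
        _ = U * (E * E) * Uᴴ := by rw [hU1, Matrix.mul_one]; simp only [Matrix.mul_assoc]
    have hone : ((d:ℂ)^2) • (1 : Matrix (Fin n) (Fin n) ℂ)
        = Matrix.diagonal (fun _ => (d:ℂ)^2) := by
      ext i j
      by_cases hij : i = j <;> simp [Matrix.one_apply, Matrix.diagonal_apply, hij]
    have hdd : Matrix.diagonal (fun _ : Fin n => (d:ℂ)^2)
        - Matrix.diagonal (fun i => ((hH.eigenvalues i : ℂ) - μ)^2)
        = Matrix.diagonal (fun i => (((d^2 - (hH.eigenvalues i - μ)^2 : ℝ)) : ℂ)) := by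
      rw [Matrix.diagonal_sub]
      exact congrArg Matrix.diagonal (funext fun i => by push_cast; ring)
    rw [h1, hsm ((d:ℂ)^2), ← Matrix.sub_mul, ← Matrix.mul_sub, hone, hEE, hdd]
  rw [key]
  refine Matrix.PosSemidef.mul_mul_conjTranspose_same ?_ U
  refine Matrix.PosSemidef.diagonal ?_
  intro i
  simp only [Pi.zero_apply]
  rw [Complex.zero_le_real]
  have h1 := hlo i
  have h2 := hhi i
  nlinarith [sq_nonneg (hH.eigenvalues i - μ)]



lemma le_sortedDesc_zero {m : ℕ} (hm : 0 < m) (f : Fin m → ℝ) (i : Fin m) :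
    f i ≤ sortedDesc f ⟨0, hm⟩ := by
  have hrev : (⟨0, hm⟩ : Fin m).rev = ⟨m - 1, by omega⟩ := by
    ext; simp [Fin.rev]
  have h1 : f i = (f ∘ Tuple.sort f) ((Tuple.sort f)⁻¹ i) := by
    simp
  rw [sortedDesc, hrev, h1]
  refine Tuple.monotone_sort f ?_
  rw [Fin.le_def]
  have := ((Tuple.sort f)⁻¹ i).isLt
  simp
  omega

lemma sortedDesc_last_le {m : ℕ} (hm : 0 < m) (f : Fin m → ℝ) (i : Fin m) :
    sortedDesc f ⟨m - 1, Nat.sub_lt hm Nat.one_pos⟩ ≤ f i := by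
  have hrev : (⟨m - 1, by omega⟩ : Fin m).rev = ⟨0, hm⟩ := by
    ext; simp [Fin.rev]; omega
  have h1 : f i = (f ∘ Tuple.sort f) ((Tuple.sort f)⁻¹ i) := by
    simp
  rw [sortedDesc, hrev, h1]
  refine Tuple.monotone_sort f ?_
  rw [Fin.le_def]
  simp

lemma re_trace_eq_sum_eigenvalues {k : ℕ} {N : Matrix (Fin k) (Fin k) ℂ}
    (hN : N.IsHermitian) : Complex.re N.trace = ∑ i, hN.eigenvalues i := by
  have hspec := hN.spectral_theorem
  rw [Unitary.conjStarAlgAut_apply, Matrix.star_eq_conjTranspose] at hspec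
  set U : Matrix (Fin k) (Fin k) ℂ := (hN.eigenvectorUnitary : Matrix (Fin k) (Fin k) ℂ)
  have hU1 : Uᴴ * U = 1 := by
    rw [← Matrix.star_eq_conjTranspose]
    exact Matrix.mem_unitaryGroup_iff'.mp hN.eigenvectorUnitary.2
  conv_lhs => rw [hspec]
  rw [Matrix.trace_mul_cycle, hU1, Matrix.one_mul, Matrix.trace_diagonal]
  rw [Complex.re_sum]
  simp [RCLike.ofReal]

lemma eigenvalues_le_one {k : ℕ} {N : Matrix (Fin k) (Fin k) ℂ}
    (hN : N.IsHermitian) (h : ((1 : Matrix (Fin k) (Fin k) ℂ) - N).PosSemidef) (i : Fin k) :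
    hN.eigenvalues i ≤ 1 := by
  set v := ⇑(hN.eigenvectorBasis i) with hv
  have h0 := h.re_dotProduct_nonneg v
  have h1 : dotProduct (star v) (((1 : Matrix (Fin k) (Fin k) ℂ) - N) *ᵥ v)
      = dotProduct (star v) v - dotProduct (star v) (N *ᵥ v) := by
    rw [Matrix.sub_mulVec, Matrix.one_mulVec, dotProduct_sub]
  have h2 : Complex.re (dotProduct (star v) v) = 1 := by
    have := EuclideanSpace.inner_eq_star_dotProduct (hN.eigenvectorBasis i)
      (hN.eigenvectorBasis i)
    have hnorm : ‖hN.eigenvectorBasis i‖ = 1 := hN.eigenvectorBasis.orthonormal.1 i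
    rw [← hv] at this
    have hin : (inner ℂ (hN.eigenvectorBasis i) (hN.eigenvectorBasis i) : ℂ) = 1 := by
      rw [inner_self_eq_norm_sq_to_K, hnorm]; norm_num
    rw [hin] at this
    rw [dotProduct_comm, ← this]
    norm_num
  have h3 : Complex.re (dotProduct (star v) (N *ᵥ v)) = hN.eigenvalues i :=
    (hN.eigenvalues_eq i).symm
  rw [h1] at h0
  have h0' : 0 ≤ (dotProduct (star v) v).re
      - (dotProduct (star v) (N *ᵥ v)).re := by
    simpa [Complex.sub_re] using h0
  rw [h2, h3] at h0'
  linarith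





lemma psd_one_sub_self_mul_conjTranspose {n k : ℕ} {P : Matrix (Fin n) (Fin k) ℂ}
    (hP : Pᴴ * P = 1) : ((1 : Matrix (Fin n) (Fin n) ℂ) - P * Pᴴ).PosSemidef := by
  have h1 : ((1 : Matrix (Fin n) (Fin n) ℂ) - P * Pᴴ)
      = ((1 : Matrix (Fin n) (Fin n) ℂ) - P * Pᴴ)ᴴ * ((1 : Matrix (Fin n) (Fin n) ℂ) - P * Pᴴ) := by
    rw [Matrix.conjTranspose_sub, Matrix.conjTranspose_one, Matrix.conjTranspose_mul,
      Matrix.conjTranspose_conjTranspose]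
    have hid : P * Pᴴ * (P * Pᴴ) = P * Pᴴ := by
      calc P * Pᴴ * (P * Pᴴ) = P * (Pᴴ * P) * Pᴴ := by simp only [Matrix.mul_assoc]
        _ = P * Pᴴ := by rw [hP, Matrix.mul_one]
    rw [Matrix.sub_mul, Matrix.one_mul, Matrix.mul_sub, Matrix.mul_one, hid]
    abel
  rw [h1]
  exact Matrix.posSemidef_conjTranspose_mul_self _

lemma sinThetaF_eq {n k : ℕ} (P Pstar : Matrix (Fin n) (Fin k) ℂ)
    (hPstar : Pstarᴴ * Pstar = 1) (hP : Pᴴ * P = 1) :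
    sinThetaF P Pstar
      = Real.sqrt ((k : ℝ) - Complex.re ((((Pᴴ * Pstar)ᴴ) * (Pᴴ * Pstar)).trace)) := by
  set B : Matrix (Fin k) (Fin k) ℂ := Pᴴ * Pstar with hB
  have hNpsd := Matrix.posSemidef_conjTranspose_mul_self B
  set ev := hNpsd.isHermitian.eigenvalues with hev
  have hev0 : ∀ j, 0 ≤ ev j := hNpsd.eigenvalues_nonneg
  have h1N : ((1 : Matrix (Fin k) (Fin k) ℂ) - Bᴴ * B).PosSemidef := by
    have hBB : Bᴴ * B = Pstarᴴ * (P * Pᴴ) * Pstar := by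
      rw [hB, Matrix.conjTranspose_mul, Matrix.conjTranspose_conjTranspose]
      simp only [Matrix.mul_assoc]
    have he : (1 : Matrix (Fin k) (Fin k) ℂ) - Bᴴ * B
        = Pstarᴴ * ((1 : Matrix (Fin n) (Fin n) ℂ) - P * Pᴴ) * Pstar := by
      rw [Matrix.mul_sub, Matrix.sub_mul, Matrix.mul_one, hPstar, hBB]
    rw [he]
    exact (psd_one_sub_self_mul_conjTranspose hP).conjTranspose_mul_mul_same Pstar
  have hev1 : ∀ j, ev j ≤ 1 := fun j => eigenvalues_le_one hNpsd.isHermitian h1N j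
  set g : Fin k → ℝ := fun j => Real.sqrt (ev j) with hg
  have hsv : ∀ i : Fin k, sv B i = g ((Tuple.sort g) i.rev) := fun i => rfl
  have hterm : ∀ i : Fin k, Real.sin (Real.arccos (sv B i)) ^ 2 = 1 - ev ((Tuple.sort g) i.rev) := by
    intro i
    rw [hsv i, Real.sin_arccos]
    have h1 : (g ((Tuple.sort g) i.rev)) ^ 2 = ev ((Tuple.sort g) i.rev) :=
      Real.sq_sqrt (hev0 _)
    rw [Real.sq_sqrt (by rw [h1]; linarith [hev1 ((Tuple.sort g) i.rev)]), h1]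
  have hsum : ∑ i, Real.sin (Real.arccos (sv B i)) ^ 2 = (k : ℝ) - ∑ j, ev j := by
    simp_rw [hterm]
    rw [Finset.sum_sub_distrib, Finset.sum_const, Finset.card_univ, Fintype.card_fin]
    have : ∑ i : Fin k, ev ((Tuple.sort g) i.rev) = ∑ j, ev j := by
      exact Equiv.sum_comp (Fin.revPerm.trans (Tuple.sort g)) ev
    rw [this]
    simp
  rw [sinThetaF, ← hB, hsum, re_trace_eq_sum_eigenvalues hNpsd.isHermitian]



theorem residual_le_spread_mul_sinTheta {n k : ℕ} (hn : 0 < n)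
    {H : Matrix (Fin n) (Fin n) ℂ} (hH : H.IsHermitian)
    (Pstar P : Matrix (Fin n) (Fin k) ℂ)
    (hPstar : Pstarᴴ * Pstar = 1) (hP : Pᴴ * P = 1)
    (hinv : ∃ M : Matrix (Fin k) (Fin k) ℂ, H * Pstar = Pstar * M) :
    frobNorm (H * P - P * (Pᴴ * H * P)) ≤
      (eigsDesc hH ⟨0, hn⟩ - eigsDesc hH ⟨n - 1, by omega⟩) * sinThetaF P Pstar := by
  obtain ⟨M, hM⟩ := hinv
  set hi := eigsDesc hH ⟨0, hn⟩ with hhi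
  set lo := eigsDesc hH ⟨n - 1, by omega⟩ with hlo
  have hhi' : ∀ i, hH.eigenvalues i ≤ hi := fun i => le_sortedDesc_zero hn hH.eigenvalues i
  have hlo' : ∀ i, lo ≤ hH.eigenvalues i := fun i => sortedDesc_last_le hn hH.eigenvalues i
  set μ : ℝ := (hi + lo)/2 with hμ
  set d : ℝ := (hi - lo)/2 with hd
  have hd0 : 0 ≤ d := by
    have h1 := hlo' ⟨0, hn⟩
    have h2 := hhi' ⟨0, hn⟩
    rw [hd]; linarith
  set G : Matrix (Fin n) (Fin n) ℂ := H - (μ:ℂ) • 1 with hG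
  have hpsdG : (((d:ℂ))^2 • 1 - G * G).PosSemidef := psd_core hH hlo' hhi'
  have hGh : Gᴴ = G := by
    rw [hG, Matrix.conjTranspose_sub, hH.eq, Matrix.conjTranspose_smul,
      Matrix.conjTranspose_one]
    norm_num
  set Pi0 : Matrix (Fin n) (Fin n) ℂ := 1 - P * Pᴴ with hPi0
  set Q : Matrix (Fin n) (Fin n) ℂ := Pstar * Pstarᴴ with hQ
  have hPih : Pi0ᴴ = Pi0 := by
    rw [hPi0, Matrix.conjTranspose_sub, Matrix.conjTranspose_one, Matrix.conjTranspose_mul,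
      Matrix.conjTranspose_conjTranspose]
  have hPiidem : Pi0 * Pi0 = Pi0 := by
    have hid : P * Pᴴ * (P * Pᴴ) = P * Pᴴ := by
      calc P * Pᴴ * (P * Pᴴ) = P * (Pᴴ * P) * Pᴴ := by simp only [Matrix.mul_assoc]
        _ = P * Pᴴ := by rw [hP, Matrix.mul_one]
    rw [hPi0, Matrix.sub_mul, Matrix.one_mul, Matrix.mul_sub, Matrix.mul_one, hid]
    abel
  -- M and commutation
  have hMval : M = Pstarᴴ * H * Pstar := by
    calc M = (Pstarᴴ * Pstar) * M := by rw [hPstar, Matrix.one_mul]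
      _ = Pstarᴴ * (Pstar * M) := by rw [Matrix.mul_assoc]
      _ = Pstarᴴ * (H * Pstar) := by rw [hM]
      _ = Pstarᴴ * H * Pstar := by rw [Matrix.mul_assoc]
  have hMh : Mᴴ = M := by
    rw [hMval]
    rw [Matrix.conjTranspose_mul, Matrix.conjTranspose_mul, Matrix.conjTranspose_conjTranspose]
    rw [hH.eq, Matrix.mul_assoc]
  have hcomm : H * Q = Q * H := by
    have hPstarH : Pstarᴴ * H = M * Pstarᴴ := by
      calc Pstarᴴ * H = (Hᴴ * Pstar)ᴴ := by
            rw [Matrix.conjTranspose_mul, Matrix.conjTranspose_conjTranspose]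
        _ = (H * Pstar)ᴴ := by rw [hH.eq]
        _ = (Pstar * M)ᴴ := by rw [hM]
        _ = Mᴴ * Pstarᴴ := by rw [Matrix.conjTranspose_mul]
        _ = M * Pstarᴴ := by rw [hMh]
    calc H * Q = (H * Pstar) * Pstarᴴ := by rw [hQ, Matrix.mul_assoc]
      _ = Pstar * M * Pstarᴴ := by rw [hM]
      _ = Pstar * (M * Pstarᴴ) := by rw [Matrix.mul_assoc]
      _ = Pstar * (Pstarᴴ * H) := by rw [hPstarH]
      _ = Q * H := by rw [hQ, Matrix.mul_assoc]
  have hcommG : G * Q = Q * G := by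
    rw [hG, Matrix.sub_mul, Matrix.mul_sub, hcomm, Matrix.smul_mul, Matrix.one_mul,
      Matrix.mul_smul, Matrix.mul_one]
  -- residual identity
  have hPiX : ∀ X : Matrix (Fin n) (Fin k) ℂ, Pi0 * X = X - P * (Pᴴ * X) := fun X => by
    rw [hPi0, Matrix.sub_mul 1 (P * Pᴴ) X, Matrix.one_mul, Matrix.mul_assoc]
  have hres : H * P - P * (Pᴴ * H * P) = Pi0 * G * P := by
    have e1 : G * P = H * P - (μ:ℂ) • P := by
      rw [hG, Matrix.sub_mul H ((μ:ℂ) • 1) P, Matrix.smul_mul, Matrix.one_mul]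
    have e2 : Pᴴ * (G * P) = Pᴴ * H * P - (μ:ℂ) • 1 := by
      rw [e1, Matrix.mul_sub Pᴴ (H * P) ((μ:ℂ) • P), Matrix.mul_smul, hP, Matrix.mul_assoc]
    calc H * P - P * (Pᴴ * H * P)
        = (H * P - (μ:ℂ) • P) - P * (Pᴴ * H * P - (μ:ℂ) • 1) := by
          rw [Matrix.mul_sub P (Pᴴ * H * P) ((μ:ℂ) • 1), Matrix.mul_smul, Matrix.mul_one]
          abel
      _ = G * P - P * (Pᴴ * (G * P)) := by rw [← e1, ← e2]
      _ = Pi0 * (G * P) := (hPiX (G * P)).symm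
      _ = Pi0 * G * P := by rw [Matrix.mul_assoc]
  -- split
  have hsplit : Pi0 * G * P = (Pi0 * Q) * (G * P) + (Pi0 * G) * ((1 - Q) * P) := by
    have h1 : (Pi0 * Q) * (G * P) = Pi0 * G * (Q * P) := by
      calc (Pi0 * Q) * (G * P) = Pi0 * (Q * G) * P := by simp only [Matrix.mul_assoc]
        _ = Pi0 * (G * Q) * P := by rw [hcommG]
        _ = Pi0 * G * (Q * P) := by simp only [Matrix.mul_assoc]
    have h2 : Q * P + (1 - Q) * P = P := by
      rw [Matrix.sub_mul 1 Q P, Matrix.one_mul]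
      abel
    rw [h1, ← Matrix.mul_add, h2, Matrix.mul_assoc]
  -- PSD facts
  have hGPG : G * (P * Pᴴ) * G = (G * P) * (G * P)ᴴ := by
    rw [Matrix.conjTranspose_mul, hGh]
    simp only [Matrix.mul_assoc]
  have hGPiG : G * Pi0 * G = (Pi0 * G)ᴴ * (Pi0 * G) := by
    rw [Matrix.conjTranspose_mul, hGh, hPih]
    calc G * Pi0 * G = G * (Pi0 * Pi0) * G := by rw [hPiidem]
      _ = G * Pi0 * (Pi0 * G) := by simp only [Matrix.mul_assoc]
  have hsplitG : G * Pi0 * G = G * G - G * (P * Pᴴ) * G := by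
    rw [hPi0, Matrix.mul_sub G 1 (P * Pᴴ), Matrix.mul_one,
      Matrix.sub_mul G (G * (P * Pᴴ)) G]
  have hdecomp : ((d:ℂ))^2 • 1 - G * Pi0 * G
      = (((d:ℂ))^2 • 1 - G * G) + G * (P * Pᴴ) * G := by
    rw [hsplitG]
    abel
  have hpsdA : (((d:ℂ))^2 • 1 - (Pi0 * G)ᴴ * (Pi0 * G)).PosSemidef := by
    rw [← hGPiG, hdecomp]
    exact hpsdG.add (hGPG ▸ Matrix.posSemidef_self_mul_conjTranspose (G * P))
  have hpsdB : (((d:ℂ))^2 • 1 - (G * P) * (G * P)ᴴ).PosSemidef := by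
    have hdecomp2 : ((d:ℂ))^2 • 1 - (G * P) * (G * P)ᴴ
        = (((d:ℂ))^2 • 1 - G * G) + G * Pi0 * G := by
      rw [← hGPG]
      have : G * (P * Pᴴ) * G = G * G - G * Pi0 * G := by
        rw [hsplitG]
        abel
      rw [this]
      abel
    rw [hdecomp2]
    exact hpsdG.add (hGPiG ▸ Matrix.posSemidef_conjTranspose_mul_self (Pi0 * G))
  -- Frobenius values
  set t : ℝ := Complex.re ((((Pᴴ * Pstar)ᴴ) * (Pᴴ * Pstar)).trace) with ht
  have hQQ : Q * Q = Q := by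
    calc Q * Q = Pstar * (Pstarᴴ * Pstar) * Pstarᴴ := by rw [hQ]; simp only [Matrix.mul_assoc]
      _ = Q := by rw [hPstar, Matrix.mul_one, hQ]
  have htraceQ : Complex.re Q.trace = (k : ℝ) := by
    rw [hQ, Matrix.trace_mul_comm, hPstar, Matrix.trace_one]
    simp
  have htraceQPQ : Complex.re ((Q * (P * Pᴴ) * Q).trace) = t := by
    have e : Q * (P * Pᴴ) * Q = Pstar * ((Pᴴ * Pstar)ᴴ * (Pᴴ * Pstar)) * Pstarᴴ := by
      rw [hQ, Matrix.conjTranspose_mul, Matrix.conjTranspose_conjTranspose]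
      simp only [Matrix.mul_assoc]
    rw [e, Matrix.trace_mul_cycle, ← Matrix.mul_assoc, hPstar, Matrix.one_mul, ht]
  have hQh : Qᴴ = Q := by
    rw [hQ, Matrix.conjTranspose_mul, Matrix.conjTranspose_conjTranspose]
  have h1 : frobNorm (Pi0 * Q) = Real.sqrt ((k:ℝ) - t) := by
    rw [frobNorm_eq_trace]
    have e : (Pi0 * Q)ᴴ * (Pi0 * Q) = Q - Q * (P * Pᴴ) * Q := by
      rw [Matrix.conjTranspose_mul, hPih, hQh]
      calc Q * Pi0 * (Pi0 * Q) = Q * (Pi0 * Pi0) * Q := by simp only [Matrix.mul_assoc]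
        _ = Q * Pi0 * Q := by rw [hPiidem]
        _ = Q * Q - Q * (P * Pᴴ) * Q := by
            rw [hPi0, Matrix.mul_sub, Matrix.sub_mul, Matrix.mul_one]
        _ = Q - Q * (P * Pᴴ) * Q := by rw [hQQ]
    rw [e, Matrix.trace_sub, Complex.sub_re, htraceQ, htraceQPQ]
  have h2 : frobNorm ((1 - Q) * P) = Real.sqrt ((k:ℝ) - t) := by
    rw [frobNorm_eq_trace]
    have hQidem : (1 - Q) * (1 - Q) = 1 - Q := by
      rw [Matrix.sub_mul, Matrix.one_mul, Matrix.mul_sub, Matrix.mul_one, hQQ]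
      abel
    have e : ((1 - Q) * P)ᴴ * ((1 - Q) * P)
        = 1 - (Pᴴ * Pstar) * (Pᴴ * Pstar)ᴴ := by
      rw [Matrix.conjTranspose_mul, Matrix.conjTranspose_sub, Matrix.conjTranspose_one, hQh]
      calc Pᴴ * (1 - Q) * ((1 - Q) * P) = Pᴴ * ((1 - Q) * (1 - Q)) * P := by
            simp only [Matrix.mul_assoc]
        _ = Pᴴ * (1 - Q) * P := by rw [hQidem]
        _ = Pᴴ * P - Pᴴ * Q * P := by
            rw [Matrix.mul_sub, Matrix.sub_mul, Matrix.mul_one]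
        _ = 1 - (Pᴴ * Pstar) * (Pᴴ * Pstar)ᴴ := by
            rw [hP, hQ, Matrix.conjTranspose_mul, Matrix.conjTranspose_conjTranspose]
            simp only [Matrix.mul_assoc]
    rw [e, Matrix.trace_sub, Complex.sub_re, Matrix.trace_one, Matrix.trace_mul_comm]
    rw [ht]
    simp
  -- assemble
  rw [hres, hsplit, sinThetaF_eq P Pstar hPstar hP, ← ht]
  have b1 : frobNorm ((Pi0 * Q) * (G * P)) ≤ Real.sqrt ((k:ℝ) - t) * d := by
    have := frobNorm_mul_le_right hd0 (Pi0 * Q) hpsdB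
    rwa [h1] at this
  have b2 : frobNorm ((Pi0 * G) * ((1 - Q) * P)) ≤ d * Real.sqrt ((k:ℝ) - t) := by
    have := frobNorm_mul_le_left hd0 hpsdA ((1 - Q) * P)
    rwa [h2] at this
  calc frobNorm ((Pi0 * Q) * (G * P) + (Pi0 * G) * ((1 - Q) * P))
      ≤ frobNorm ((Pi0 * Q) * (G * P)) + frobNorm ((Pi0 * G) * ((1 - Q) * P)) :=
        frobNorm_add_le _ _
    _ ≤ Real.sqrt ((k:ℝ) - t) * d + d * Real.sqrt ((k:ℝ) - t) := add_le_add b1 b2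
    _ = (hi - lo) * Real.sqrt ((k:ℝ) - t) := by rw [hd]; ring
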